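/- For any nonnegative square matrix A, the spectral radius of the symmetrized matrix Ā defined by Ā(i,j) = sqrt(A(i,j)·A(j,i)) is at most the spectral radius of A. -/

import Mathlib

open Matrix Filter Topology ENNReal
open scoped NNReal

attribute [local instance] Matrix.linftyOpNormedRing Matrix.linftyOpNormedAlgebra Matrix.linfty_opNormOneClass

section helpers
variable {n : ℕ}

private lemma pow_entry_nonneg' (M : Matrix (Fin n) (Fin n) ℝ) (hM : ∀ i j, 0 ≤ M i j) :
    ∀ m i j, 0 ≤ (M ^ m) i j := by
  intro m
  induction m with
  | zero => intro i j; simp [Matrix.one_apply]; split <;> norm_num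
  | succ m ih =>
    intro i j
    rw [pow_succ, Matrix.mul_apply]
    exact Finset.sum_nonneg fun k _ => mul_nonneg (ih i k) (hM k j)

private lemma entry_nnnorm_le' (M : Matrix (Fin n) (Fin n) ℝ) (i j : Fin n) : ‖M i j‖₊ ≤ ‖M‖₊ := by
  rw [Matrix.linfty_opNNNorm_def]
  exact le_trans (Finset.single_le_sum (f := fun j => ‖M i j‖₊) (fun _ _ => zero_le)
    (Finset.mem_univ j)) (Finset.le_sup (f := fun i => ∑ j, ‖M i j‖₊) (Finset.mem_univ i))

private lemma entry_le_norm' (M : Matrix (Fin n) (Fin n) ℝ) (i j : Fin n) : |M i j| ≤ ‖M‖ := by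
  have := entry_nnnorm_le' M i j
  rw [← NNReal.coe_le_coe] at this
  simpa [Real.norm_eq_abs] using this

private lemma map_ofReal_nnnorm' (M : Matrix (Fin n) (Fin n) ℝ) :
    ‖M.map Complex.ofReal‖₊ = ‖M‖₊ := by
  simp [Matrix.linfty_opNNNorm_def, Matrix.map_apply, Complex.nnnorm_real]

private lemma map_ofReal_pow' (M : Matrix (Fin n) (Fin n) ℝ) (m : ℕ) :
    (M.map Complex.ofReal) ^ m = (M ^ m).map Complex.ofReal := by
  have : ∀ (N : Matrix (Fin n) (Fin n) ℝ), N.map Complex.ofReal =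
      (Complex.ofRealHom.mapMatrix : Matrix (Fin n) (Fin n) ℝ →+* _) N := fun N => rfl
  rw [this, this, ← map_pow]

private lemma key_entry' (A : Matrix (Fin n) (Fin n) ℝ) (hA : ∀ i j, 0 ≤ A i j)
    (hAp : ∀ m i j, 0 ≤ (A ^ m) i j) :
    ∀ m i j, ((Matrix.of fun i j => Real.sqrt (A i j * A j i)) ^ m) i j ≤
      Real.sqrt ((A ^ m) i j * (A ^ m) j i) := by
  set B : Matrix (Fin n) (Fin n) ℝ := Matrix.of fun i j => Real.sqrt (A i j * A j i) with hB
  intro m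
  induction m with
  | zero =>
    intro i j
    by_cases h : i = j
    · subst h; simp [Matrix.one_apply]
    · simp [Matrix.one_apply, h]
  | succ m ih =>
    intro i j
    have hstep : ∀ k, B i k * (B ^ m) k j ≤
        Real.sqrt (A i k * (A ^ m) k j) * Real.sqrt (A k i * (A ^ m) j k) := by
      intro k
      have h1 : B i k = Real.sqrt (A i k) * Real.sqrt (A k i) := by
        rw [hB]; exact Real.sqrt_mul (hA i k) _
      have h2 : (B ^ m) k j ≤ Real.sqrt ((A ^ m) k j) * Real.sqrt ((A ^ m) j k) := by
        rw [← Real.sqrt_mul (hAp m k j)]; exact ih k j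
      calc B i k * (B ^ m) k j
          ≤ (Real.sqrt (A i k) * Real.sqrt (A k i)) *
            (Real.sqrt ((A ^ m) k j) * Real.sqrt ((A ^ m) j k)) := by
            rw [h1]
            exact mul_le_mul_of_nonneg_left h2 (by positivity)
        _ = (Real.sqrt (A i k) * Real.sqrt ((A ^ m) k j)) *
            (Real.sqrt (A k i) * Real.sqrt ((A ^ m) j k)) := by ring
        _ = Real.sqrt (A i k * (A ^ m) k j) * Real.sqrt (A k i * (A ^ m) j k) := by
            rw [Real.sqrt_mul (hA i k), Real.sqrt_mul (hA k i)]
    calc (B ^ (m + 1)) i j = ∑ k, B i k * (B ^ m) k j := by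
          rw [pow_succ', Matrix.mul_apply]
      _ ≤ ∑ k, Real.sqrt (A i k * (A ^ m) k j) * Real.sqrt (A k i * (A ^ m) j k) :=
          Finset.sum_le_sum fun k _ => hstep k
      _ ≤ Real.sqrt (∑ k, A i k * (A ^ m) k j) * Real.sqrt (∑ k, A k i * (A ^ m) j k) :=
          Real.sum_sqrt_mul_sqrt_le _ (fun k => mul_nonneg (hA i k) (hAp m k j))
            (fun k => mul_nonneg (hA k i) (hAp m j k))
      _ = Real.sqrt ((A ^ (m + 1)) i j * (A ^ (m + 1)) j i) := by
          rw [← Real.sqrt_mul (Finset.sum_nonneg fun k _ => mul_nonneg (hA i k) (hAp m k j))]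
          congr 2
          · rw [pow_succ', Matrix.mul_apply]
          · rw [pow_succ, Matrix.mul_apply]
            exact Finset.sum_congr rfl fun k _ => mul_comm _ _

private lemma rpow_const_tendsto_one (c : ℝ≥0∞) (hc1 : 1 ≤ c) (hct : c ≠ ⊤) :
    Tendsto (fun m : ℕ => c ^ (1 / (m : ℝ))) atTop (𝓝 1) := by
  rw [tendsto_order]
  constructor
  · intro a ha
    filter_upwards with m
    refine lt_of_lt_of_le ha ?_
    rcases Nat.eq_zero_or_pos m with h | h
    · simp [h]
    · calc (1 : ℝ≥0∞) = 1 ^ (1 / (m : ℝ)) := by rw [ENNReal.one_rpow]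
        _ ≤ c ^ (1 / (m : ℝ)) :=
          ENNReal.rpow_le_rpow hc1 (by positivity)
  · intro a ha
    obtain ⟨ε, h1ε, hεa⟩ := exists_between ha
    filter_upwards [ENNReal.eventually_pow_one_div_le hct h1ε] with m hm
    exact lt_of_le_of_lt hm hεa

end helpers

/-- The spectral radius of a real square matrix: the supremum of the absolute
values of its (complex) eigenvalues. -/
noncomputable def specRad {n : ℕ} (A : Matrix (Fin n) (Fin n) ℝ) : ℝ :=
  sSup ((fun z : ℂ => ‖z‖) '' spectrum ℂ (A.map Complex.ofReal))

theorem stmt1 {n : ℕ} (A : Matrix (Fin n) (Fin n) ℝ) (hA : ∀ i j, 0 ≤ A i j) :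
    specRad (Matrix.of fun i j => Real.sqrt (A i j * A j i)) ≤ specRad A := by
  classical
  rcases Nat.eq_zero_or_pos n with h0 | hn
  · subst h0
    have hempty : ∀ (M : Matrix (Fin 0) (Fin 0) ℝ),
        spectrum ℂ (M.map Complex.ofReal) = ∅ := by
      intro M
      ext z
      simp [spectrum.mem_iff, isUnit_of_subsingleton]
    simp [specRad, hempty, Real.sSup_empty]
  haveI : Nonempty (Fin n) := Fin.pos_iff_nonempty.mp hn
  haveI : CompleteSpace (Matrix (Fin n) (Fin n) ℂ) := FiniteDimensional.complete ℂ _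
  set B : Matrix (Fin n) (Fin n) ℝ := Matrix.of fun i j => Real.sqrt (A i j * A j i) with hB
  set Ac := A.map Complex.ofReal with hAc
  set Bc := B.map Complex.ofReal with hBc
  have hAp : ∀ m i j, 0 ≤ (A ^ m) i j := pow_entry_nonneg' A hA
  have hBnn : ∀ i j, 0 ≤ B i j := fun i j => Real.sqrt_nonneg _
  have hBp : ∀ m i j, 0 ≤ (B ^ m) i j := pow_entry_nonneg' B hBnn
  have hkey := key_entry' A hA hAp
  -- the norm bound ‖Bc^m‖₊ ≤ n * ‖Ac^m‖₊
  have hnorm : ∀ m : ℕ, ‖Bc ^ m‖₊ ≤ (n : ℝ≥0) * ‖Ac ^ m‖₊ := by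
    intro m
    rw [hBc, hAc, map_ofReal_pow', map_ofReal_pow', map_ofReal_nnnorm', map_ofReal_nnnorm']
    have hentry : ∀ i j, ‖(B ^ m) i j‖₊ ≤ ‖A ^ m‖₊ := by
      intro i j
      rw [← NNReal.coe_le_coe]
      have h1 : (B ^ m) i j ≤ Real.sqrt ((A ^ m) i j * (A ^ m) j i) := hkey m i j
      have h2 : Real.sqrt ((A ^ m) i j * (A ^ m) j i) ≤ ‖A ^ m‖ := by
        have e1 : (A ^ m) i j ≤ ‖A ^ m‖ := (le_abs_self _).trans (entry_le_norm' _ i j)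
        have e2 : (A ^ m) j i ≤ ‖A ^ m‖ := (le_abs_self _).trans (entry_le_norm' _ j i)
        calc Real.sqrt ((A ^ m) i j * (A ^ m) j i)
            ≤ Real.sqrt (‖A ^ m‖ * ‖A ^ m‖) :=
              Real.sqrt_le_sqrt (mul_le_mul e1 e2 (hAp m j i) (norm_nonneg _))
          _ = ‖A ^ m‖ := Real.sqrt_mul_self (norm_nonneg _)
      have : |(B ^ m) i j| ≤ ‖A ^ m‖ := by
        rw [abs_of_nonneg (hBp m i j)]; exact h1.trans h2
      simpa [coe_nnnorm, Real.norm_eq_abs] using this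
    rw [Matrix.linfty_opNNNorm_def (B ^ m)]
    refine Finset.sup_le fun i _ => ?_
    calc ∑ j, ‖(B ^ m) i j‖₊ ≤ ∑ _j : Fin n, ‖A ^ m‖₊ :=
          Finset.sum_le_sum fun j _ => hentry i j
      _ = (n : ℝ≥0) * ‖A ^ m‖₊ := by simp [mul_comm]
  -- Gelfand's formula
  have hGB := spectrum.pow_nnnorm_pow_one_div_tendsto_nhds_spectralRadius Bc
  have hGA := spectrum.pow_nnnorm_pow_one_div_tendsto_nhds_spectralRadius Ac
  have hAtop : spectralRadius ℂ Ac ≠ ⊤ :=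
    (lt_of_le_of_lt (spectrum.spectralRadius_le_nnnorm (𝕜 := ℂ) Ac) ENNReal.coe_lt_top).ne
  have hn1 : (1 : ℝ≥0∞) ≤ (n : ℝ≥0∞) := by exact_mod_cast hn
  have hcard := rpow_const_tendsto_one (n : ℝ≥0∞) hn1 (by simp)
  have hg : Tendsto (fun m : ℕ => (n : ℝ≥0∞) ^ (1 / (m : ℝ)) *
      (‖Ac ^ m‖₊ : ℝ≥0∞) ^ (1 / (m : ℝ))) atTop (𝓝 (spectralRadius ℂ Ac)) := by
    have := ENNReal.Tendsto.mul hcard (Or.inr hAtop) hGA (Or.inr one_ne_top)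
    simpa using this
  have hle : ∀ m : ℕ, (‖Bc ^ m‖₊ : ℝ≥0∞) ^ (1 / (m : ℝ)) ≤
      (n : ℝ≥0∞) ^ (1 / (m : ℝ)) * (‖Ac ^ m‖₊ : ℝ≥0∞) ^ (1 / (m : ℝ)) := by
    intro m
    rw [← ENNReal.mul_rpow_of_nonneg _ _ (by positivity)]
    refine ENNReal.rpow_le_rpow ?_ (by positivity)
    calc (‖Bc ^ m‖₊ : ℝ≥0∞) ≤ ((n : ℝ≥0) * ‖Ac ^ m‖₊ : ℝ≥0) := by
          exact_mod_cast hnorm m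
      _ = (n : ℝ≥0∞) * (‖Ac ^ m‖₊ : ℝ≥0∞) := by push_cast; ring
  have hmain : spectralRadius ℂ Bc ≤ spectralRadius ℂ Ac :=
    le_of_tendsto_of_tendsto' hGB hg hle
  -- transfer to specRad
  have hBspec : specRad B ≤ (spectralRadius ℂ Bc).toReal := by
    have hBtop : spectralRadius ℂ Bc ≠ ⊤ :=
      (lt_of_le_of_lt (spectrum.spectralRadius_le_nnnorm (𝕜 := ℂ) Bc) ENNReal.coe_lt_top).ne
    refine Real.sSup_le ?_ ENNReal.toReal_nonneg
    rintro x ⟨z, hz, rfl⟩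
    have h1 : (‖z‖₊ : ℝ≥0∞) ≤ spectralRadius ℂ Bc := le_iSup₂ (α := ℝ≥0∞) z hz
    have := ENNReal.toReal_mono hBtop h1
    simpa [coe_nnnorm] using this
  have hAspec : (spectralRadius ℂ Ac).toReal ≤ specRad A := by
    obtain ⟨k, hk, hkeq⟩ := spectrum.exists_nnnorm_eq_spectralRadius_of_nonempty
      (𝕜 := ℂ) (A := Matrix (Fin n) (Fin n) ℂ) (spectrum.nonempty Ac)
    rw [← hkeq]
    have hbdd : BddAbove ((fun z : ℂ => ‖z‖) '' spectrum ℂ Ac) := by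
      refine ⟨‖Ac‖ * ‖(1 : Matrix (Fin n) (Fin n) ℂ)‖, ?_⟩
      rintro x ⟨z, hz, rfl⟩
      simpa using spectrum.norm_le_norm_mul_of_mem hz
    have hmem : ‖k‖ ∈ (fun z : ℂ => ‖z‖) '' spectrum ℂ Ac := ⟨k, hk, rfl⟩
    have := le_csSup hbdd hmem
    simpa [specRad, coe_nnnorm] using this
  calc specRad B ≤ (spectralRadius ℂ Bc).toReal := hBspec
    _ ≤ (spectralRadius ℂ Ac).toReal := ENNReal.toReal_mono hAtop hmain
    _ ≤ specRad A := hAspec
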